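/- Let d ≥ 1 and let a ∈ ℝ^{d×d} be symmetric. (i) If a is positive semidefinite with largest eigenvalue λ₊, then max_{ξ ∈ S^{d−1}} (2‖aξ‖² − ⟨aξ, ξ⟩²) = λ₊², and a unit vector ξ attains this maximum if and only if aξ = λ₊·ξ. (ii) If a is negative semidefinite with smallest eigenvalue λ₋, then max_{ξ ∈ S^{d−1}} (2‖aξ‖² − ⟨aξ, ξ⟩²) = λ₋², and a unit vector ξ attains this maximum if and only if aξ = λ₋·ξ. -/

import Mathlib

open Matrix Finset in
lemma aux_psd (d : ℕ) (a : Matrix (Fin d) (Fin d) ℝ) (ha : a.IsSymm)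
    (hpsd : a.PosSemidef) (lp : ℝ)
    (hlp : IsGreatest {μ : ℝ | ∃ v : Fin d → ℝ, v ≠ 0 ∧ a.mulVec v = μ • v} lp) :
    IsGreatest {g : ℝ | ∃ ξ : Fin d → ℝ, (∑ i, ξ i ^ 2) = 1 ∧
        g = 2 * (∑ i, (a.mulVec ξ i) ^ 2) - (∑ i, a.mulVec ξ i * ξ i) ^ 2} (lp ^ 2) ∧
      ∀ ξ : Fin d → ℝ, (∑ i, ξ i ^ 2) = 1 →
        (2 * (∑ i, (a.mulVec ξ i) ^ 2) - (∑ i, a.mulVec ξ i * ξ i) ^ 2 = lp ^ 2 ↔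
          a.mulVec ξ = lp • ξ) := by
  classical
  have hH : a.IsHermitian := hpsd.1
  -- all eigenvalues are ≤ lp
  have hev : ∀ i, hH.eigenvalues i ≤ lp := by
    intro i
    apply hlp.2
    refine ⟨⇑(hH.eigenvectorBasis i), ?_, hH.mulVec_eigenvectorBasis i⟩
    intro h0
    exact hH.eigenvectorBasis.toBasis.ne_zero i (by
      ext j; exact congrFun h0 j)
  -- the matrix lp • 1 - a is PSD
  have hc : (lp • (1 : Matrix (Fin d) (Fin d) ℝ) - a).PosSemidef := by
    set V : Matrix (Fin d) (Fin d) ℝ := (hH.eigenvectorUnitary : Matrix (Fin d) (Fin d) ℝ) with hV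
    have hVV : V * Vᴴ = 1 := by
      have := Matrix.mem_unitaryGroup_iff.mp hH.eigenvectorUnitary.2
      simpa [Matrix.star_eq_conjTranspose] using this
    have hsp : a = V * Matrix.diagonal (RCLike.ofReal ∘ hH.eigenvalues) * Vᴴ := by
      simpa [Matrix.star_eq_conjTranspose] using hH.spectral_theorem
    have hD : Matrix.diagonal (fun i => lp - hH.eigenvalues i)
        = lp • (1 : Matrix (Fin d) (Fin d) ℝ)
          - Matrix.diagonal (RCLike.ofReal ∘ hH.eigenvalues) := by
      ext i j
      by_cases h : i = j <;>
        simp [Matrix.diagonal_apply, Matrix.one_apply, h]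
    have key : lp • (1 : Matrix (Fin d) (Fin d) ℝ) - a
        = V * Matrix.diagonal (fun i => lp - hH.eigenvalues i) * Vᴴ := by
      rw [hD, Matrix.mul_sub, Matrix.sub_mul]
      rw [Matrix.mul_smul, Matrix.mul_one, Matrix.smul_mul, hVV, ← hsp]
    rw [key]
    exact (Matrix.posSemidef_diagonal_iff.mpr
      (fun i => sub_nonneg.mpr (hev i))).mul_mul_conjTranspose_same V
  -- the matrix lp • a - a * a is PSD
  have hm : (lp • a - a * a).PosSemidef := by
    set s := (open scoped MatrixOrder in CFC.sqrt a) with hsdef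
    have hs : s * s = a := by
      open scoped MatrixOrder in exact CFC.sqrt_mul_sqrt_self a hpsd.nonneg
    have hherm : sᴴ = s := by
      open scoped MatrixOrder in exact (CFC.sqrt_nonneg a).posSemidef.1
    have key : lp • a - a * a = s * (lp • (1 : Matrix (Fin d) (Fin d) ℝ) - a) * sᴴ := by
      rw [hherm, Matrix.mul_sub, Matrix.sub_mul, Matrix.mul_smul, Matrix.mul_one,
        Matrix.smul_mul, hs]
      congr 1
      rw [← hs]
      simp [mul_assoc]
    rw [key]
    exact hc.mul_mul_conjTranspose_same s
  -- basic scalar computations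
  have hta : ∀ ξ : Fin d → ℝ, dotProduct ξ (a.mulVec ξ) = ∑ i, a.mulVec ξ i * ξ i := by
    intro ξ; simp [dotProduct, mul_comm]
  have hsumsq : ∀ ξ : Fin d → ℝ, dotProduct ξ ξ = ∑ i, ξ i ^ 2 := by
    intro ξ; simp [dotProduct, sq]
  have hn2 : ∀ ξ : Fin d → ℝ, dotProduct ξ ((a * a).mulVec ξ) = ∑ i, a.mulVec ξ i ^ 2 := by
    intro ξ
    rw [← Matrix.mulVec_mulVec, dotProduct_mulVec, ← Matrix.mulVec_transpose,
      show aᵀ = a from ha]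
    simp [dotProduct, sq]
  -- inequality t ≤ lp
  have htlp : ∀ ξ : Fin d → ℝ, (∑ i, ξ i ^ 2) = 1 → (∑ i, a.mulVec ξ i * ξ i) ≤ lp := by
    intro ξ hξ
    have h0 := hc.dotProduct_mulVec_nonneg ξ
    rw [star_trivial, Matrix.sub_mulVec, Matrix.smul_mulVec, Matrix.one_mulVec,
      dotProduct_sub, dotProduct_smul, hta, hsumsq, hξ] at h0
    simp only [smul_eq_mul, mul_one] at h0
    linarith
  -- nonnegativity of t
  have ht0 : ∀ ξ : Fin d → ℝ, 0 ≤ ∑ i, a.mulVec ξ i * ξ i := by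
    intro ξ
    have h0 := hpsd.dotProduct_mulVec_nonneg ξ
    rwa [star_trivial, hta] at h0
  -- n2 ≤ lp * t
  have hnt : ∀ ξ : Fin d → ℝ, (∑ i, a.mulVec ξ i ^ 2) ≤ lp * ∑ i, a.mulVec ξ i * ξ i := by
    intro ξ
    have h0 := hm.dotProduct_mulVec_nonneg ξ
    rw [star_trivial, Matrix.sub_mulVec, Matrix.smul_mulVec,
      dotProduct_sub, dotProduct_smul, hta, hn2] at h0
    simp only [smul_eq_mul] at h0
    linarith
  -- the iff characterization
  have keyiff : ∀ ξ : Fin d → ℝ, (∑ i, ξ i ^ 2) = 1 →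
      (2 * (∑ i, (a.mulVec ξ i) ^ 2) - (∑ i, a.mulVec ξ i * ξ i) ^ 2 = lp ^ 2 ↔
        a.mulVec ξ = lp • ξ) := by
    intro ξ hξ
    constructor
    · intro h
      have h1 := hnt ξ
      have h2 := htlp ξ hξ
      have h3 := ht0 ξ
      set t := ∑ i, a.mulVec ξ i * ξ i with htdef
      have hteq : t = lp := by nlinarith [sq_nonneg (lp - t)]
      -- t = lp forces (lp•1 - a) ξ = 0
      have h4 : dotProduct (star ξ) ((lp • (1 : Matrix (Fin d) (Fin d) ℝ) - a).mulVec ξ) = 0 := by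
        rw [star_trivial, Matrix.sub_mulVec, Matrix.smul_mulVec, Matrix.one_mulVec,
          dotProduct_sub, dotProduct_smul, hta, hsumsq, hξ, ← htdef, hteq]
        simp
      have h5 := (hc.dotProduct_mulVec_zero_iff ξ).mp h4
      rw [Matrix.sub_mulVec, Matrix.smul_mulVec, Matrix.one_mulVec, sub_eq_zero] at h5
      exact h5.symm
    · intro h
      rw [h]
      have e1 : ∑ i, (lp • ξ) i ^ 2 = lp ^ 2 := by
        have : ∑ i, (lp • ξ) i ^ 2 = lp ^ 2 * ∑ i, ξ i ^ 2 := by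
          rw [Finset.mul_sum]
          exact Finset.sum_congr rfl fun i _ => by simp [mul_pow]
        rw [this, hξ, mul_one]
      have e2 : ∑ i, (lp • ξ) i * ξ i = lp := by
        have : ∑ i, (lp • ξ) i * ξ i = lp * ∑ i, ξ i ^ 2 := by
          rw [Finset.mul_sum]
          exact Finset.sum_congr rfl fun i _ => by simp [sq]; ring
        rw [this, hξ, mul_one]
      rw [e1, e2]
      ring
  refine ⟨⟨?_, ?_⟩, keyiff⟩
  · -- membership: normalize an eigenvector
    obtain ⟨v, hv0, hv⟩ := hlp.1
    have hvpos : 0 < ∑ i, v i ^ 2 := by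
      have hex : ∃ i, v i ≠ 0 := by
        by_contra hcon
        push_neg at hcon
        exact hv0 (funext hcon)
      obtain ⟨i, hi⟩ := hex
      exact Finset.sum_pos' (fun j _ => sq_nonneg _) ⟨i, Finset.mem_univ i, by positivity⟩
    set r : ℝ := Real.sqrt (∑ i, v i ^ 2) with hrdef
    have hr : 0 < r := Real.sqrt_pos.mpr hvpos
    set ξ : Fin d → ℝ := r⁻¹ • v with hξdef
    have hξ1 : ∑ i, ξ i ^ 2 = 1 := by
      have : ∑ i, ξ i ^ 2 = (r⁻¹) ^ 2 * ∑ i, v i ^ 2 := by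
        rw [Finset.mul_sum]
        exact Finset.sum_congr rfl fun i _ => by simp [hξdef, mul_pow]
      rw [this, inv_pow, hrdef, Real.sq_sqrt hvpos.le, inv_mul_cancel₀ hvpos.ne']
    have haξ : a.mulVec ξ = lp • ξ := by
      rw [hξdef, Matrix.mulVec_smul, hv, smul_comm]
    exact ⟨ξ, hξ1, ((keyiff ξ hξ1).mpr haξ).symm⟩
  · rintro g ⟨ξ, hξ, rfl⟩
    have h1 := hnt ξ
    have h2 := htlp ξ hξ
    have h3 := ht0 ξ
    nlinarith [sq_nonneg (lp - ∑ i, a.mulVec ξ i * ξ i)]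

/-- For a symmetric semidefinite matrix `a`, the quantity `2‖aξ‖² - ⟨aξ,ξ⟩²` is maximized
over the unit sphere at the extremal eigenvalue squared, exactly at the corresponding
eigenvectors. -/
theorem statement12 (d : ℕ) (hd : 1 ≤ d) (a : Matrix (Fin d) (Fin d) ℝ) (ha : a.IsSymm) :
    -- (i) the positive semidefinite case
    (∀ lp : ℝ, a.PosSemidef →
      IsGreatest {μ : ℝ | ∃ v : Fin d → ℝ, v ≠ 0 ∧ a.mulVec v = μ • v} lp →
      (IsGreatest {g : ℝ | ∃ ξ : Fin d → ℝ, (∑ i, ξ i ^ 2) = 1 ∧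
          g = 2 * (∑ i, (a.mulVec ξ i) ^ 2) - (∑ i, a.mulVec ξ i * ξ i) ^ 2} (lp ^ 2) ∧
        ∀ ξ : Fin d → ℝ, (∑ i, ξ i ^ 2) = 1 →
          (2 * (∑ i, (a.mulVec ξ i) ^ 2) - (∑ i, a.mulVec ξ i * ξ i) ^ 2 = lp ^ 2 ↔
            a.mulVec ξ = lp • ξ))) ∧
    -- (ii) the negative semidefinite case
    (∀ lm : ℝ, (-a).PosSemidef →
      IsLeast {μ : ℝ | ∃ v : Fin d → ℝ, v ≠ 0 ∧ a.mulVec v = μ • v} lm →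
      (IsGreatest {g : ℝ | ∃ ξ : Fin d → ℝ, (∑ i, ξ i ^ 2) = 1 ∧
          g = 2 * (∑ i, (a.mulVec ξ i) ^ 2) - (∑ i, a.mulVec ξ i * ξ i) ^ 2} (lm ^ 2) ∧
        ∀ ξ : Fin d → ℝ, (∑ i, ξ i ^ 2) = 1 →
          (2 * (∑ i, (a.mulVec ξ i) ^ 2) - (∑ i, a.mulVec ξ i * ξ i) ^ 2 = lm ^ 2 ↔
            a.mulVec ξ = lm • ξ))) := by
  constructor
  · intro lp hpsd hlp
    exact aux_psd d a ha hpsd lp hlp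
  · intro lm hpsd hlm
    have hbs : (-a).IsSymm := ha.neg
    have hlm' : IsGreatest {μ : ℝ | ∃ v : Fin d → ℝ, v ≠ 0 ∧ (-a).mulVec v = μ • v} (-lm) := by
      constructor
      · obtain ⟨v, hv0, hv⟩ := hlm.1
        exact ⟨v, hv0, by rw [Matrix.neg_mulVec, hv, neg_smul]⟩
      · rintro μ ⟨v, hv0, hv⟩
        rw [Matrix.neg_mulVec] at hv
        have hmem : -μ ∈ {μ : ℝ | ∃ v : Fin d → ℝ, v ≠ 0 ∧ a.mulVec v = μ • v} :=
          ⟨v, hv0, by simpa [neg_smul] using congrArg Neg.neg hv⟩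
        have := hlm.2 hmem
        linarith
    obtain ⟨hgr, hiff⟩ := aux_psd d (-a) hbs hpsd (-lm) hlm'
    have hEq : ∀ ξ : Fin d → ℝ,
        2 * (∑ i, ((-a).mulVec ξ i) ^ 2) - (∑ i, (-a).mulVec ξ i * ξ i) ^ 2
          = 2 * (∑ i, (a.mulVec ξ i) ^ 2) - (∑ i, a.mulVec ξ i * ξ i) ^ 2 := by
      intro ξ
      simp [Matrix.neg_mulVec, Pi.neg_apply, neg_mul, Finset.sum_neg_distrib, neg_sq]
    constructor
    · have hset : {g : ℝ | ∃ ξ : Fin d → ℝ, (∑ i, ξ i ^ 2) = 1 ∧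
          g = 2 * (∑ i, ((-a).mulVec ξ i) ^ 2) - (∑ i, (-a).mulVec ξ i * ξ i) ^ 2}
          = {g : ℝ | ∃ ξ : Fin d → ℝ, (∑ i, ξ i ^ 2) = 1 ∧
          g = 2 * (∑ i, (a.mulVec ξ i) ^ 2) - (∑ i, a.mulVec ξ i * ξ i) ^ 2} := by
        ext g
        constructor
        · rintro ⟨ξ, h1, rfl⟩; exact ⟨ξ, h1, hEq ξ⟩
        · rintro ⟨ξ, h1, rfl⟩; exact ⟨ξ, h1, (hEq ξ).symm⟩
      rw [hset, neg_sq] at hgr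
      exact hgr
    · intro ξ hξ
      have h := hiff ξ hξ
      rw [hEq ξ, neg_sq] at h
      rw [h, Matrix.neg_mulVec, neg_smul, neg_inj]
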